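/- Let r ≥ 1 and n ≥ r be positive integers and let (s₁, …, s_r) be an r-tuple of positive integers. Then the multiple harmonic star sum H*_n(s₁, …, s_r) is not an integer, with the single exception H*_1(s₁) = 1 (i.e., n = r = 1, where the sum equals 1 for every s₁). -/

import Mathlib

/-- The multiple harmonic star sum
`H*_n(s₁, …, s_r) = ∑_{1 ≤ k₁ ≤ ⋯ ≤ k_r ≤ n} 1/(k₁^{s₁} ⋯ k_r^{s_r})`,
where `k i` ranges over `Fin n` so the actual summation index is `(k i : ℕ) + 1`. -/
def mhsStar (n r : ℕ) (s : Fin r → ℕ) : ℚ :=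
  ∑ k ∈ Finset.univ.filter (fun k : Fin r → Fin n => ∀ i j : Fin r, i ≤ j → k i ≤ k j),
    ∏ i, (1 : ℚ) / ((k i : ℕ) + 1 : ℚ) ^ s i

open Finset

-- product valuation
lemma padicValRat_prod {ι : Type*} (p : ℕ) [Fact p.Prime] (S : Finset ι) (F : ι → ℚ)
    (h : ∀ i ∈ S, F i ≠ 0) :
    padicValRat p (∏ i ∈ S, F i) = ∑ i ∈ S, padicValRat p (F i) := by
  induction S using Finset.cons_induction with
  | empty => simp
  | cons a S ha ih =>
    rw [Finset.prod_cons, Finset.sum_cons,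
      padicValRat.mul (h a (Finset.mem_cons_self _ _))
        (Finset.prod_ne_zero_iff.2 fun i hi => h i (Finset.mem_cons_of_mem hi)),
      ih fun i hi => h i (Finset.mem_cons_of_mem hi)]

lemma lt_padicValRat_sum {ι : Type*} (p : ℕ) [Fact p.Prime] (c : ℤ) {S : Finset ι} {F : ι → ℚ}
    (hS : S.Nonempty) (hpos : ∀ i ∈ S, 0 < F i) (hF : ∀ i ∈ S, c < padicValRat p (F i)) :
    c < padicValRat p (∑ i ∈ S, F i) := by
  induction S using Finset.cons_induction with
  | empty => exact absurd hS (by simp)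
  | cons a S ha ih =>
    rw [Finset.sum_cons]
    rcases S.eq_empty_or_nonempty with rfl | hS'
    · simpa using hF a (Finset.mem_cons_self _ _)
    · have hsum : 0 < ∑ i ∈ S, F i :=
        Finset.sum_pos (fun i hi => hpos i (Finset.mem_cons_of_mem hi)) hS'
      have h1 := hF a (Finset.mem_cons_self _ _)
      have h2 := ih hS' (fun i hi => hpos i (Finset.mem_cons_of_mem hi))
        (fun i hi => hF i (Finset.mem_cons_of_mem hi))
      have hne : F a + ∑ i ∈ S, F i ≠ 0 := by
        have := hpos a (Finset.mem_cons_self _ _); positivity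
      exact lt_of_lt_of_le (lt_min h1 h2) (padicValRat.min_le_padicValRat_add hne)

lemma val_term (m s : ℕ) :
    padicValRat 2 ((1:ℚ) / ((m:ℚ)+1)^s) = -((s : ℤ) * padicValNat 2 (m+1)) := by
  have h1 : ((m:ℚ)+1) = ((m+1 : ℕ) : ℚ) := by push_cast; ring
  rw [one_div, padicValRat.inv, padicValRat.pow _, h1, padicValRat.of_nat]

lemma v2_le_log {k n : ℕ} (hk : k < n) : padicValNat 2 (k+1) ≤ Nat.log 2 n := by
  have h1 : 2 ^ padicValNat 2 (k+1) ≤ k + 1 :=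
    Nat.le_of_dvd (Nat.succ_pos _) pow_padicValNat_dvd
  exact (Nat.le_log_iff_pow_le one_lt_two (by omega)).2 (le_trans h1 (by omega))

lemma v2_eq_log {k n : ℕ} (hk : k < n) (h : padicValNat 2 (k+1) = Nat.log 2 n) :
    k + 1 = 2 ^ Nat.log 2 n := by
  set a := Nat.log 2 n with ha
  have hd : 2 ^ a ∣ k + 1 := h ▸ pow_padicValNat_dvd
  obtain ⟨c, hc⟩ := hd
  have hlt : n < 2 ^ (a+1) := Nat.lt_pow_succ_log_self one_lt_two n
  have h2a : 0 < 2 ^ a := Nat.pow_pos (by norm_num)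
  have : c = 1 := by
    rcases Nat.lt_or_ge c 2 with h2 | h2
    · interval_cases c <;> omega
    · exfalso
      have : 2 ^ a * 2 ≤ 2 ^ a * c := Nat.mul_le_mul_left _ h2
      have : 2 ^ (a+1) ≤ k + 1 := by rw [pow_succ]; omega
      omega
  rw [this, mul_one] at hc; exact hc

lemma mhsStar_one (s : Fin 1 → ℕ) : mhsStar 1 1 s = 1 := by
  rw [mhsStar]
  have h : (Finset.univ.filter (fun k : Fin 1 → Fin 1 => ∀ i j : Fin 1, i ≤ j → k i ≤ k j))
      = {fun _ => 0} := by decide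
  rw [h, Finset.sum_singleton]
  simp

lemma mhsStar_not_int (n r : ℕ) (hr : 1 ≤ r) (hn2 : 2 ≤ n)
    (s : Fin r → ℕ) (hs : ∀ i, 0 < s i) (m : ℤ) : mhsStar n r s ≠ (m : ℚ) := by
  classical
  have hrne : Nonempty (Fin r) := ⟨⟨0, hr⟩⟩
  set a := Nat.log 2 n with ha_def
  have ha : 1 ≤ a := Nat.log_pos one_lt_two hn2
  have h2an : 2 ^ a ≤ n := Nat.pow_log_le_self 2 (by omega)
  have h2apos : 1 ≤ 2 ^ a := Nat.one_le_two_pow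
  set A : ℤ := ∑ i, (s i : ℤ) with hA_def
  have hA : 1 ≤ A := by
    have : 0 < A := Finset.sum_pos (fun i _ => by exact_mod_cast hs i) Finset.univ_nonempty
    omega
  set F : (Fin r → Fin n) → ℚ := fun k => ∏ i, (1:ℚ)/((k i : ℕ)+1 : ℚ)^(s i) with hF_def
  set T := Finset.univ.filter (fun k : Fin r → Fin n => ∀ i j : Fin r, i ≤ j → k i ≤ k j)
    with hT_def
  have hmhs : mhsStar n r s = ∑ k ∈ T, F k := rfl
  have hFpos : ∀ k : Fin r → Fin n, 0 < F k := by
    intro k; apply Finset.prod_pos; intro i _; positivity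
  have hval : ∀ k : Fin r → Fin n,
      padicValRat 2 (F k) = -∑ i, (s i : ℤ) * padicValNat 2 ((k i : ℕ)+1) := by
    intro k
    rw [hF_def]
    rw [padicValRat_prod 2 _ _ (fun i _ => by positivity)]
    simp_rw [val_term]
    rw [Finset.sum_neg_distrib]
  have hconst : ∀ c : Fin n, (fun _ : Fin r => c) ∈ T := by
    intro c; rw [hT_def]; simp
  have h2a1 : 2 ^ a - 1 < n := by omega
  set k0 : Fin r → Fin n := fun _ => ⟨2^a - 1, h2a1⟩ with hk0_def
  have hk0T : k0 ∈ T := hconst _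
  have hvk0 : padicValRat 2 (F k0) = -(a * A) := by
    rw [hval k0]
    congr 1
    have hstep : ∀ i : Fin r, (s i : ℤ) * padicValNat 2 ((k0 i : ℕ)+1) = a * (s i : ℤ) := by
      intro i
      have : (k0 i : ℕ) + 1 = 2 ^ a := by simp [hk0_def]; omega
      rw [this, padicValNat.prime_pow]
      ring
    rw [Finset.sum_congr rfl (fun i _ => hstep i), ← Finset.mul_sum]
  have hother : ∀ k ∈ T.erase k0, -((a:ℤ) * A) < padicValRat 2 (F k) := by
    intro k hk
    rw [hval k]
    have hne : k ≠ k0 := (Finset.mem_erase.1 hk).1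
    obtain ⟨j, hj⟩ : ∃ j, k j ≠ k0 j := by
      by_contra h; push_neg at h; exact hne (funext h)
    have hub : ∀ i : Fin r, (s i : ℤ) * padicValNat 2 ((k i : ℕ)+1) ≤ (s i : ℤ) * a := by
      intro i
      have := v2_le_log (n := n) (k i).isLt
      exact mul_le_mul_of_nonneg_left (by exact_mod_cast this) (by positivity)
    have hstrict : (s j : ℤ) * padicValNat 2 ((k j : ℕ)+1) < (s j : ℤ) * a := by
      have h1 : padicValNat 2 ((k j : ℕ)+1) ≤ a := v2_le_log (k j).isLt
      have h2 : padicValNat 2 ((k j : ℕ)+1) ≠ a := by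
        intro h
        apply hj
        have h3 := v2_eq_log (k j).isLt h
        rw [← ha_def] at h3
        apply Fin.ext
        have : (k0 j : ℕ) = 2 ^ a - 1 := by simp [hk0_def]
        omega
      have h4 : padicValNat 2 ((k j : ℕ)+1) < a := lt_of_le_of_ne h1 h2
      exact mul_lt_mul_of_pos_left (by exact_mod_cast h4) (by exact_mod_cast hs j)
    have hlt := Finset.sum_lt_sum (fun i _ => hub i) ⟨j, Finset.mem_univ j, hstrict⟩
    have hsum : ∑ i : Fin r, (s i : ℤ) * a = a * A := by
      rw [hA_def, Finset.mul_sum]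
      exact Finset.sum_congr rfl (fun i _ => mul_comm _ _)
    rw [hsum] at hlt
    omega
  set k1 : Fin r → Fin n := fun _ => ⟨0, by omega⟩ with hk1_def
  have hk1 : k1 ∈ T.erase k0 := by
    refine Finset.mem_erase.2 ⟨?_, hconst _⟩
    intro h
    have := congrFun h ⟨0, hr⟩
    have h2 : (0 : ℕ) = 2 ^ a - 1 := congrArg Fin.val this
    have : 2 ≤ 2 ^ a := by
      calc 2 = 2 ^ 1 := rfl
      _ ≤ 2 ^ a := Nat.pow_le_pow_right (by norm_num) ha
    omega
  have hsplit : mhsStar n r s = F k0 + ∑ k ∈ T.erase k0, F k := by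
    rw [hmhs, ← Finset.add_sum_erase _ _ hk0T]
  have hRpos : 0 < ∑ k ∈ T.erase k0, F k :=
    Finset.sum_pos (fun k _ => hFpos k) ⟨k1, hk1⟩
  have hvR : -((a:ℤ) * A) < padicValRat 2 (∑ k ∈ T.erase k0, F k) :=
    lt_padicValRat_sum 2 _ ⟨k1, hk1⟩ (fun k _ => hFpos k) hother
  have hvalS : padicValRat 2 (mhsStar n r s) = -((a:ℤ) * A) := by
    rw [hsplit, padicValRat.add_eq_of_lt (by positivity) (hFpos k0).ne' hRpos.ne'
      (by rw [hvk0]; exact hvR), hvk0]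
  intro hm
  rw [hm, padicValRat.of_int] at hvalS
  have h0 : (0 : ℤ) ≤ padicValInt 2 m := by
    unfold padicValInt; exact Int.natCast_nonneg _
  have : (0:ℤ) < (a : ℤ) * A := by positivity
  omega

/-- The multiple harmonic star sum `H*_n(s₁,…,s_r)` with `n ≥ r ≥ 1` and positive
exponents is an integer if and only if `n = r = 1`, in which case it equals `1`. -/
theorem mhsStar_not_integer (n r : ℕ) (hr : 1 ≤ r) (hn : r ≤ n)
    (s : Fin r → ℕ) (hs : ∀ i, 0 < s i) :
    ((∃ m : ℤ, mhsStar n r s = (m : ℚ)) ↔ n = 1 ∧ r = 1) ∧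
    (n = 1 ∧ r = 1 → mhsStar n r s = 1) := by
  have hone : n = 1 ∧ r = 1 → mhsStar n r s = 1 := by
    rintro ⟨hn1, hr1⟩
    subst hn1; subst hr1
    exact mhsStar_one s
  refine ⟨⟨?_, fun h => ⟨1, by rw [hone h]; norm_cast⟩⟩, hone⟩
  rintro ⟨m, hm⟩
  rcases Nat.lt_or_ge n 2 with h2 | h2
  · constructor <;> omega
  · exact absurd hm (mhsStar_not_int n r hr h2 s hs m)
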